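/- Let σ(t) := 1/(1 + e^{−t}). Let K ≥ 2 and let X be any set, and let p*_0, p*_1, …, p*_{K-1} : X → [0,1] satisfy p*_0(x) = 1 and p*_k(x) ≤ p*_{k-1}(x) for all x ∈ X and k = 1, …, K-1 (rank consistency). There exists a constant C > 0 depending only on K such that for every ε > 0 and every family of functions ĝ_1, …, ĝ_{K-1} : X → ℝ satisfying |ĝ_k(x) − log( q*_k(x) / (1 − q*_k(x)) )| ≤ ε for all x and k, where q*_k(x) := (p*_k(x) + ε)/(p*_{k-1}(x) + 2ε), the CONDOR outputs p_k(x) := ∏_{k'=1}^{k} σ(ĝ_{k'}(x)) satisfy |p_k(x) − p*_k(x)| ≤ C·ε for every x ∈ X and every k = 1, …, K-1. -/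

import Mathlib

/-- The logistic sigmoid `σ(t) = 1/(1 + e^{−t})`. -/
noncomputable def sigmoid (t : ℝ) : ℝ := 1 / (1 + Real.exp (-t))

lemma sigmoid_pos (t : ℝ) : 0 < sigmoid t := by
  unfold sigmoid; positivity

lemma sigmoid_le_one (t : ℝ) : sigmoid t ≤ 1 := by
  unfold sigmoid
  rw [div_le_one (by positivity)]
  linarith [Real.exp_pos (-t)]

lemma sigmoid_mono {a b : ℝ} (h : a ≤ b) : sigmoid a ≤ sigmoid b := by
  unfold sigmoid
  have he : Real.exp (-b) ≤ Real.exp (-a) := Real.exp_le_exp.mpr (by linarith)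
  exact one_div_le_one_div_of_le (by positivity) (by linarith)

lemma sigmoid_sub_le {a b : ℝ} (hab : a ≤ b) : sigmoid b - sigmoid a ≤ b - a := by
  unfold sigmoid
  have ha : 0 < 1 + Real.exp (-a) := by positivity
  have hb : 0 < 1 + Real.exp (-b) := by positivity
  rw [div_sub_div _ _ hb.ne' ha.ne', div_le_iff₀ (by positivity)]
  have h1 : Real.exp (-a) * Real.exp (a - b) = Real.exp (-b) := by
    rw [← Real.exp_add]; ring_nf
  have h2 : (a - b) + 1 ≤ Real.exp (a - b) := Real.add_one_le_exp _
  have e1 : Real.exp (-a) - Real.exp (-b) ≤ (b - a) * Real.exp (-a) := by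
    nlinarith [mul_le_mul_of_nonneg_left h2 (Real.exp_pos (-a)).le]
  have e2 : (b - a) * Real.exp (-a) ≤ (b - a) * ((1 + Real.exp (-b)) * (1 + Real.exp (-a))) := by
    apply mul_le_mul_of_nonneg_left _ (by linarith)
    nlinarith [Real.exp_pos (-a), Real.exp_pos (-b)]
  linarith

lemma sigmoid_dist (a b : ℝ) : |sigmoid a - sigmoid b| ≤ |a - b| := by
  rcases le_total a b with h | h
  · rw [abs_sub_comm, abs_of_nonneg (sub_nonneg.2 (sigmoid_mono h)),
      abs_sub_comm a b, abs_of_nonneg (sub_nonneg.2 h)]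
    exact sigmoid_sub_le h
  · rw [abs_of_nonneg (sub_nonneg.2 (sigmoid_mono h)), abs_of_nonneg (sub_nonneg.2 h)]
    exact sigmoid_sub_le h

lemma sigmoid_logit {q : ℝ} (h0 : 0 < q) (h1 : q < 1) :
    sigmoid (Real.log (q / (1 - q))) = q := by
  have hq1 : 0 < 1 - q := by linarith
  have hqq : 0 < q / (1 - q) := div_pos h0 hq1
  unfold sigmoid
  rw [Real.exp_neg, Real.exp_log hqq]
  field_simp
  ring

/-- CONDOR expressiveness: for any rank consistent targets
`p* 0 ≡ 1 ≥ p* 1 ≥ ⋯ ≥ p* (K-1) ≥ 0` on a set `X`, there is `C > 0` depending only on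
`K` such that whenever the upstream outputs `ĝ k` approximate the logits of the
regularized conditionals `q*_k = (p*_k + ε)/(p*_{k-1} + 2ε)` to within `ε`, the CONDOR
outputs `∏_{k'=1}^{k} σ(ĝ_{k'}(x))` approximate `p*_k(x)` to within `C·ε`. -/
theorem condor_expressiveness {X : Type*} (K : ℕ) (hK : 2 ≤ K)
    (pstar : ℕ → X → ℝ)
    (hp0 : ∀ x, pstar 0 x = 1)
    (hrange : ∀ k x, k ≤ K - 1 → 0 ≤ pstar k x ∧ pstar k x ≤ 1)
    (hmono : ∀ k x, 1 ≤ k → k ≤ K - 1 → pstar k x ≤ pstar (k - 1) x) :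
    ∃ C : ℝ, 0 < C ∧
      ∀ ε : ℝ, 0 < ε →
        ∀ g : ℕ → X → ℝ,
          (∀ k x, 1 ≤ k → k ≤ K - 1 →
            |g k x - Real.log ((pstar k x + ε) / (pstar (k - 1) x + 2 * ε) /
              (1 - (pstar k x + ε) / (pstar (k - 1) x + 2 * ε)))| ≤ ε) →
          ∀ k x, 1 ≤ k → k ≤ K - 1 →
            |(∏ k' ∈ Finset.Icc 1 k, sigmoid (g k' x)) - pstar k x| ≤ C * ε := by
  have hKpos : (0 : ℝ) < (K : ℝ) := by exact_mod_cast (show 0 < K by omega)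
  refine ⟨4 * K, by positivity, ?_⟩
  intro ε hε g hg
  have aux : ∀ k, k ≤ K - 1 → ∀ x,
      |(∏ k' ∈ Finset.Icc 1 k, sigmoid (g k' x)) - pstar k x| ≤ 4 * k * ε := by
    intro k
    induction k with
    | zero =>
      intro _ x
      simp [hp0 x]
    | succ k ih =>
      intro hk x
      have hk' : k ≤ K - 1 := Nat.le_of_succ_le hk
      have hgk := hg (k + 1) x (by omega) hk
      simp only [Nat.add_sub_cancel] at hgk
      obtain ⟨hr1a, hr1b⟩ := hrange (k + 1) x hk
      obtain ⟨hr0a, hr0b⟩ := hrange k x hk'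
      have hmon : pstar (k + 1) x ≤ pstar k x := by
        have := hmono (k + 1) x (by omega) hk
        simpa using this
      have hden : 0 < pstar k x + 2 * ε := by linarith
      set q : ℝ := (pstar (k + 1) x + ε) / (pstar k x + 2 * ε) with hqdef
      have hq0 : 0 < q := div_pos (by linarith) hden
      have hq1 : q < 1 := (div_lt_one hden).2 (by linarith)
      have hs : |sigmoid (g (k + 1) x) - q| ≤ ε := by
        have h := sigmoid_dist (g (k + 1) x) (Real.log (q / (1 - q)))
        rw [sigmoid_logit hq0 hq1] at h
        exact h.trans hgk
      set Q : ℝ := ∏ k' ∈ Finset.Icc 1 k, sigmoid (g k' x) with hQdef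
      set s : ℝ := sigmoid (g (k + 1) x) with hsdef
      have hQ0 : 0 ≤ Q :=
        Finset.prod_nonneg fun i _ => (sigmoid_pos _).le
      have hQ1 : Q ≤ 1 :=
        Finset.prod_le_one (fun i _ => (sigmoid_pos _).le) fun i _ => sigmoid_le_one _
      have hprod : ∏ k' ∈ Finset.Icc 1 (k + 1), sigmoid (g k' x) = Q * s :=
        Finset.prod_Icc_succ_top (by omega) _
      have hqden : q * (pstar k x + 2 * ε) = pstar (k + 1) x + ε :=
        div_mul_cancel₀ _ hden.ne'
      have heq : Q * s - pstar (k + 1) x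
          = (s - q) * Q + q * (Q - pstar k x - 2 * ε) + ε := by
        linear_combination hqden
      have ihk := ih hk' x
      have h1 : |(s - q) * Q| ≤ ε := by
        rw [abs_mul]
        calc |s - q| * |Q| ≤ ε * 1 := by
              apply mul_le_mul hs _ (abs_nonneg _) hε.le
              rw [abs_of_nonneg hQ0]; exact hQ1
          _ = ε := mul_one ε
      have h2 : |q * (Q - pstar k x - 2 * ε)| ≤ |Q - pstar k x| + 2 * ε := by
        rw [abs_mul, abs_of_pos hq0]
        have ha : |Q - pstar k x - 2 * ε| ≤ |Q - pstar k x| + 2 * ε := by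
          rw [sub_eq_add_neg (Q - pstar k x) (2 * ε)]
          refine (abs_add_le _ _).trans ?_
          rw [abs_neg, abs_of_pos (by linarith : (0:ℝ) < 2 * ε)]
        nlinarith [abs_nonneg (Q - pstar k x - 2 * ε), abs_nonneg (Q - pstar k x)]
      rw [hprod]
      calc |Q * s - pstar (k + 1) x|
          = |(s - q) * Q + q * (Q - pstar k x - 2 * ε) + ε| := by rw [heq]
        _ ≤ |(s - q) * Q + q * (Q - pstar k x - 2 * ε)| + |ε| := abs_add_le _ _
        _ ≤ (|(s - q) * Q| + |q * (Q - pstar k x - 2 * ε)|) + |ε| :=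
            add_le_add_left (abs_add_le _ _) _
        _ ≤ (ε + (|Q - pstar k x| + 2 * ε)) + ε := by
            rw [abs_of_pos hε]; exact add_le_add_left (add_le_add h1 h2) _
        _ ≤ 4 * (↑(k + 1)) * ε := by push_cast; linarith
  intro k x hk1 hkK
  calc |(∏ k' ∈ Finset.Icc 1 k, sigmoid (g k' x)) - pstar k x| ≤ 4 * k * ε :=
        aux k hkK x
    _ ≤ 4 * K * ε := by
        have : (k : ℝ) ≤ (K : ℝ) := by exact_mod_cast Nat.le_of_lt (by omega)
        nlinarith
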